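/- Let n ≥ 1, let a_1,…,a_n, z_0, z denote pairwise distinct complex variables ranging over an open set, and let A_1,…,A_n be C¹ traceless 2×2 complex-matrix-valued functions of (a_1,…,a_n,z_0). Set 𝒜(z) = Σ_{ν=1}^n A_ν/(z−a_ν) and Δ_ν = (1/2)·tr(A_ν²). Suppose Φ, a C² 2×2-matrix-valued function of (z,z_0,a_1,…,a_n), satisfies ∂_zΦ = 𝒜(z)Φ, ∂_{a_ν}Φ = −((z_0−z)/(z_0−a_ν))·(A_ν/(z−a_ν))·Φ for each ν, and ∂_{z_0}Φ = −𝒜(z_0)Φ; suppose τ is a nonvanishing C¹ function of (a_1,…,a_n,z_0) with ∂_{a_μ}τ/τ = Σ_{ν≠μ} tr(A_μA_ν)/(a_μ−a_ν) for each μ and ∂_{z_0}τ = 0; and suppose w is a C¹ scalar function of (z,z_0) with w(z,z_0)²·(z−z_0) = 1 and ∂_z w = −w/(2(z−z_0)), ∂_{z_0}w = w/(2(z−z_0)). Then the matrix function 𝒫 = w·τ·Φ satisfies the second-order PDE ∂_z∂_z𝒫 = (z−z_0)^{−1}·∂_{z_0}𝒫 + (4(z−z_0)²)^{−1}·𝒫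 + Σ_{ν=1}^n [ (z−a_ν)^{−1}·∂_{a_ν}𝒫 + Δ_ν·(z−a_ν)^{−2}·𝒫 ]. -/

import Mathlib

open Finset Matrix

attribute [local instance] Matrix.normedAddCommGroup Matrix.normedSpace

noncomputable section

/-- Points of the deformation space: `p = (z, z₀, a)` with `a = (a_1, …, a_n)`. -/
abbrev Dom (n : ℕ) := ℂ × ℂ × (Fin n → ℂ)

/-- Directional (partial) derivative of a function on the deformation space. -/
noncomputable def pd {n : ℕ} {E : Type*} [NormedAddCommGroup E] [NormedSpace ℂ E]
    (F : Dom n → E) (v : Dom n) (p : Dom n) : E :=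
  fderiv ℂ F p v

/-- Direction of `∂_z`. -/
def dz (n : ℕ) : Dom n := (1, 0, 0)

/-- Direction of `∂_{z₀}`. -/
def dz0 (n : ℕ) : Dom n := (0, 1, 0)

/-- Direction of `∂_{a_ν}`. -/
def da (n : ℕ) (ν : Fin n) : Dom n := (0, 0, Pi.single ν 1)

/-! ### Auxiliary material -/

abbrev M2 := Matrix (Fin 2) (Fin 2) ℂ

namespace IsoAux

/-! #### Matrix algebra -/

lemma traceless_sq {A : M2} (h : A.trace = 0) :
    A * A = (1/2 * (A * A).trace) • (1 : M2) := by
  rw [Matrix.trace_fin_two] at h ⊢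
  ext i j
  fin_cases i <;> fin_cases j <;>
    simp [Matrix.mul_apply, Fin.sum_univ_two, Matrix.one_apply]
  · linear_combination (A 0 0 - A 1 1) / 2 * h
  · linear_combination A 0 1 * h
  · linear_combination A 1 0 * h
  · linear_combination (A 1 1 - A 0 0) / 2 * h

lemma traceless_anticomm {A B : M2} (ha : A.trace = 0) (hb : B.trace = 0) :
    A * B + B * A = (A * B).trace • (1 : M2) := by
  rw [Matrix.trace_fin_two] at ha hb ⊢
  ext i j
  fin_cases i <;> fin_cases j <;>
    simp [Matrix.mul_apply, Fin.sum_univ_two, Matrix.one_apply]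
  · linear_combination B 0 0 * ha - A 1 1 * hb
  · linear_combination B 0 1 * ha + A 0 1 * hb
  · linear_combination B 1 0 * ha + A 1 0 * hb
  · linear_combination A 1 1 * hb - B 0 0 * ha

lemma swap_sum {n : ℕ} {E : Type*} [AddCommMonoid E] (f : Fin n → Fin n → E) :
    ∑ ν, ∑ μ ∈ univ.erase ν, f ν μ = ∑ ν, ∑ μ ∈ univ.erase ν, f μ ν :=
  Finset.sum_comm' (fun x y => by simp [mem_erase]; tauto)

lemma key_sq {n : ℕ} (z : ℂ) (a : Fin n → ℂ) (B : Fin n → M2)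
    (htr : ∀ ν, (B ν).trace = 0)
    (hz : ∀ ν, z - a ν ≠ 0)
    (hd : ∀ μ ν : Fin n, μ ≠ ν → a μ ≠ a ν) :
    (∑ ν, (z - a ν)⁻¹ • B ν) * (∑ ν, (z - a ν)⁻¹ • B ν)
      = (∑ ν, (1/2 * (B ν * B ν).trace / (z - a ν) ^ 2
          + (∑ μ ∈ univ.erase ν, (B ν * B μ).trace / (a ν - a μ)) / (z - a ν))) • (1 : M2) := by
  have step1 : (∑ ν, (z - a ν)⁻¹ • B ν) * (∑ ν, (z - a ν)⁻¹ • B ν)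
      = ∑ ν, ∑ μ, ((z - a ν)⁻¹ * (z - a μ)⁻¹) • (B ν * B μ) := by
    rw [Finset.sum_mul_sum]
    exact sum_congr rfl fun ν _ => sum_congr rfl fun μ _ => smul_mul_smul_comm _ _ _ _
  have step2 : ∀ ν : Fin n, (∑ μ, ((z - a ν)⁻¹ * (z - a μ)⁻¹) • (B ν * B μ))
      = ((z - a ν)⁻¹ * (z - a ν)⁻¹) • (B ν * B ν)
        + ∑ μ ∈ univ.erase ν, ((z - a ν)⁻¹ * (z - a μ)⁻¹) • (B ν * B μ) := by
    intro ν
    exact (Finset.add_sum_erase univ _ (mem_univ ν)).symm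
  rw [step1]
  simp only [step2]
  rw [Finset.sum_add_distrib]
  have hdiag : ∑ ν, ((z - a ν)⁻¹ * (z - a ν)⁻¹) • (B ν * B ν)
      = ∑ ν, (1/2 * (B ν * B ν).trace / (z - a ν) ^ 2) • (1 : M2) := by
    refine sum_congr rfl fun ν _ => ?_
    conv_lhs => rw [traceless_sq (htr ν)]
    rw [smul_smul]
    congr 1
    field_simp
  set O := ∑ ν, ∑ μ ∈ univ.erase ν, ((z - a ν)⁻¹ * (z - a μ)⁻¹) • (B ν * B μ) with hO
  have hswap : O = ∑ ν, ∑ μ ∈ univ.erase ν, ((z - a μ)⁻¹ * (z - a ν)⁻¹) • (B μ * B ν) :=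
    swap_sum _
  have h2O : O + O = ∑ ν, ∑ μ ∈ univ.erase ν,
      (((z - a ν)⁻¹ * (z - a μ)⁻¹) * (B ν * B μ).trace) • (1 : M2) := by
    nth_rewrite 2 [hswap]
    rw [← Finset.sum_add_distrib]
    refine sum_congr rfl fun ν _ => ?_
    rw [← Finset.sum_add_distrib]
    refine sum_congr rfl fun μ hμ => ?_
    have : (z - a μ)⁻¹ * (z - a ν)⁻¹ = (z - a ν)⁻¹ * (z - a μ)⁻¹ := mul_comm _ _
    rw [this, ← smul_add, traceless_anticomm (htr ν) (htr μ), smul_smul]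
  have hOval : O = ∑ ν, ∑ μ ∈ univ.erase ν,
      ((2:ℂ)⁻¹ * ((z - a ν)⁻¹ * (z - a μ)⁻¹) * (B ν * B μ).trace) • (1 : M2) := by
    have h2 : (2:ℂ) • O = ∑ ν, ∑ μ ∈ univ.erase ν,
        (((z - a ν)⁻¹ * (z - a μ)⁻¹) * (B ν * B μ).trace) • (1 : M2) := by
      rw [two_smul]; exact h2O
    calc O = (2:ℂ)⁻¹ • ((2:ℂ) • O) := by rw [smul_smul]; norm_num
    _ = _ := by
      rw [h2, Finset.smul_sum]
      refine sum_congr rfl fun ν _ => ?_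
      rw [Finset.smul_sum]
      refine sum_congr rfl fun μ _ => ?_
      rw [smul_smul]; ring_nf
  have hscal : ∑ ν, ∑ μ ∈ univ.erase ν,
      ((2:ℂ)⁻¹ * ((z - a ν)⁻¹ * (z - a μ)⁻¹) * (B ν * B μ).trace)
      = ∑ ν, ∑ μ ∈ univ.erase ν, (B ν * B μ).trace / (a ν - a μ) / (z - a ν) := by
    have hzero : ∑ ν, ∑ μ ∈ univ.erase ν,
        (((2:ℂ)⁻¹ * ((z - a ν)⁻¹ * (z - a μ)⁻¹) * (B ν * B μ).trace)
          - (B ν * B μ).trace / (a ν - a μ) / (z - a ν)) = 0 := by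
      set h : Fin n → Fin n → ℂ := fun ν μ =>
        ((2:ℂ)⁻¹ * ((z - a ν)⁻¹ * (z - a μ)⁻¹) * (B ν * B μ).trace)
          - (B ν * B μ).trace / (a ν - a μ) / (z - a ν) with hh
      have hsw : ∑ ν, ∑ μ ∈ univ.erase ν, h ν μ = ∑ ν, ∑ μ ∈ univ.erase ν, h μ ν := swap_sum h
      have hdou : (2:ℂ) * (∑ ν, ∑ μ ∈ univ.erase ν, h ν μ)
          = ∑ ν, ∑ μ ∈ univ.erase ν, (h ν μ + h μ ν) := by
        rw [two_mul]
        nth_rewrite 2 [hsw]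
        rw [← Finset.sum_add_distrib]
        exact sum_congr rfl fun ν _ => (Finset.sum_add_distrib).symm
      have hpair : ∀ ν μ : Fin n, μ ≠ ν → h ν μ + h μ ν = 0 := by
        intro ν μ hne
        have e1 : z - a ν ≠ 0 := hz ν
        have e2 : z - a μ ≠ 0 := hz μ
        have e3 : a ν - a μ ≠ 0 := sub_ne_zero.mpr (hd ν μ (Ne.symm hne))
        have e4 : a μ - a ν ≠ 0 := sub_ne_zero.mpr (hd μ ν hne)
        have etr : (B μ * B ν).trace = (B ν * B μ).trace := Matrix.trace_mul_comm _ _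
        rw [hh]
        simp only [etr]
        field_simp
        ring
      have hz2 : (2:ℂ) * (∑ ν, ∑ μ ∈ univ.erase ν, h ν μ) = 0 := by
        rw [hdou]
        exact sum_eq_zero fun ν _ => sum_eq_zero fun μ hμ =>
          hpair ν μ (Finset.mem_erase.mp hμ).1
      exact (mul_eq_zero.mp hz2).resolve_left two_ne_zero
    have hsub : (∑ ν, ∑ μ ∈ univ.erase ν,
        ((2:ℂ)⁻¹ * ((z - a ν)⁻¹ * (z - a μ)⁻¹) * (B ν * B μ).trace))
        - (∑ ν, ∑ μ ∈ univ.erase ν, (B ν * B μ).trace / (a ν - a μ) / (z - a ν)) = 0 := by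
      rw [← Finset.sum_sub_distrib]
      simp only [← Finset.sum_sub_distrib]
      exact hzero
    exact sub_eq_zero.mp hsub
  rw [hdiag, hOval]
  simp only [← Finset.sum_smul]
  rw [← add_smul]
  congr 1
  rw [hscal, Finset.sum_add_distrib]
  congr 1
  exact sum_congr rfl fun ν _ => (Finset.sum_div _ _ _).symm

/-! #### Calculus toolbox -/

-- matrix multiplication as a continuous bilinear map
noncomputable def mulL : M2 →L[ℂ] M2 →L[ℂ] M2 :=
  LinearMap.toContinuousLinearMap
  { toFun := fun A => LinearMap.toContinuousLinearMap (LinearMap.mulLeft ℂ A)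
    map_add' := by intro A B; ext C i j; simp [Matrix.add_mul]
    map_smul' := by intro c A; ext C i j; simp [Matrix.smul_mul] }

@[simp] lemma mulL_apply (A B : M2) : mulL A B = A * B := rfl

variable {n : ℕ} {E : Type*} [NormedAddCommGroup E] [NormedSpace ℂ E]

lemma pd_mul {f g : Dom n → M2} {p : Dom n} (v : Dom n)
    (hf : DifferentiableAt ℂ f p) (hg : DifferentiableAt ℂ g p) :
    pd (fun q => f q * g q) v p = pd f v p * g p + f p * pd g v p := by
  have h := mulL.fderiv_of_bilinear (f := f) (g := g) (x := p) hf hg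
  have heq : (fun q => f q * g q) = fun q => mulL (f q) (g q) := rfl
  rw [pd, heq]
  erw [h]
  simp [ContinuousLinearMap.precompR, ContinuousLinearMap.precompL, pd,
    ContinuousLinearMap.compL_apply, ContinuousLinearMap.flip_apply]
  change mulL (f p) (fderiv ℂ g p v) + mulL (fderiv ℂ f p v) (g p) = _
  rw [mulL_apply, mulL_apply]
  exact add_comm _ _

lemma diff_mul {f g : Dom n → M2} {p : Dom n}
    (hf : DifferentiableAt ℂ f p) (hg : DifferentiableAt ℂ g p) :
    DifferentiableAt ℂ (fun q => f q * g q) p := by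
  have heq : (fun q => f q * g q) = fun q => mulL (f q) (g q) := rfl
  rw [heq]
  exact DifferentiableAt.comp (f := fun q => (f q, g q)) p
    (mulL.isBoundedBilinearMap.differentiableAt _) (hf.prodMk hg)

lemma pd_smul {f : Dom n → ℂ} {g : Dom n → E} {p : Dom n} (v : Dom n)
    (hf : DifferentiableAt ℂ f p) (hg : DifferentiableAt ℂ g p) :
    pd (fun q => f q • g q) v p = pd f v p • g p + f p • pd g v p := by
  rw [pd, fderiv_fun_smul hf hg]; simp [pd]; abel

lemma pd_cmul {f g : Dom n → ℂ} {p : Dom n} (v : Dom n)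
    (hf : DifferentiableAt ℂ f p) (hg : DifferentiableAt ℂ g p) :
    pd (fun q => f q * g q) v p = pd f v p * g p + f p * pd g v p := by
  rw [pd, fderiv_fun_mul hf hg]; simp [pd]; ring

lemma pd_add {f g : Dom n → E} {p : Dom n} (v : Dom n)
    (hf : DifferentiableAt ℂ f p) (hg : DifferentiableAt ℂ g p) :
    pd (fun q => f q + g q) v p = pd f v p + pd g v p := by
  rw [pd, fderiv_fun_add hf hg]; simp [pd]

lemma pd_sum {ι : Type*} (s : Finset ι) {f : ι → Dom n → E} {p : Dom n} (v : Dom n)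
    (hf : ∀ i ∈ s, DifferentiableAt ℂ (f i) p) :
    pd (fun q => ∑ i ∈ s, f i q) v p = ∑ i ∈ s, pd (f i) v p := by
  rw [pd, fderiv_fun_sum hf]; simp [pd]

lemma diff_z {p : Dom n} : DifferentiableAt ℂ (fun q : Dom n => q.1) p :=
  differentiable_fst.differentiableAt
lemma diff_z0 {p : Dom n} : DifferentiableAt ℂ (fun q : Dom n => q.2.1) p :=
  (differentiable_fst.comp differentiable_snd).differentiableAt
lemma diff_a (ν : Fin n) {p : Dom n} : DifferentiableAt ℂ (fun q : Dom n => q.2.2 ν) p := by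
  exact ((ContinuousLinearMap.proj ν).comp
      ((ContinuousLinearMap.snd ℂ ℂ (Fin n → ℂ)).comp
        (ContinuousLinearMap.snd ℂ ℂ (ℂ × (Fin n → ℂ))))).differentiableAt

lemma pd_z (v p : Dom n) : pd (fun q : Dom n => q.1) v p = v.1 := by
  rw [pd]
  have : (fun q : Dom n => q.1) = (ContinuousLinearMap.fst ℂ ℂ (ℂ × (Fin n → ℂ))) := rfl
  rw [this, ContinuousLinearMap.fderiv]; rfl

lemma pd_z0 (v p : Dom n) : pd (fun q : Dom n => q.2.1) v p = v.2.1 := by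
  rw [pd]
  have : (fun q : Dom n => q.2.1) = (ContinuousLinearMap.fst ℂ ℂ (Fin n → ℂ)).comp
      (ContinuousLinearMap.snd ℂ ℂ (ℂ × (Fin n → ℂ))) := rfl
  rw [this, ContinuousLinearMap.fderiv]; rfl

lemma pd_a (ν : Fin n) (v p : Dom n) : pd (fun q : Dom n => q.2.2 ν) v p = v.2.2 ν := by
  rw [pd]
  have : (fun q : Dom n => q.2.2 ν) = (ContinuousLinearMap.proj ν).comp
      ((ContinuousLinearMap.snd ℂ ℂ (Fin n → ℂ)).comp
        (ContinuousLinearMap.snd ℂ ℂ (ℂ × (Fin n → ℂ)))) := rfl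
  rw [this, ContinuousLinearMap.fderiv]; rfl

lemma diff_za (ν : Fin n) {p : Dom n} (h : p.1 - p.2.2 ν ≠ 0) :
    DifferentiableAt ℂ (fun q : Dom n => (q.1 - q.2.2 ν)⁻¹) p :=
  (diff_z.sub (diff_a ν)).inv h

lemma pd_za (ν : Fin n) (v : Dom n) {p : Dom n} (h : p.1 - p.2.2 ν ≠ 0) :
    pd (fun q : Dom n => (q.1 - q.2.2 ν)⁻¹) v p
      = -(((p.1 - p.2.2 ν) ^ 2)⁻¹) * (v.1 - v.2.2 ν) := by
  have hd : DifferentiableAt ℂ (fun q : Dom n => q.1 - q.2.2 ν) p := diff_z.sub (diff_a ν)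
  have h2 : HasFDerivAt (fun q : Dom n => (q.1 - q.2.2 ν)⁻¹)
      ((ContinuousLinearMap.smulRight (1 : ℂ →L[ℂ] ℂ) (-((p.1 - p.2.2 ν) ^ 2)⁻¹)).comp
        (fderiv ℂ (fun q : Dom n => q.1 - q.2.2 ν) p)) p :=
    (hasFDerivAt_inv (𝕜 := ℂ) h).comp p hd.hasFDerivAt
  rw [pd, h2.fderiv]
  have hsub : fderiv ℂ (fun q : Dom n => q.1 - q.2.2 ν) p v = v.1 - v.2.2 ν := by
    rw [fderiv_fun_sub diff_z (diff_a ν)]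
    rw [ContinuousLinearMap.sub_apply]
    rw [show (fderiv ℂ (fun q : Dom n => q.1) p) v = pd (fun q : Dom n => q.1) v p from rfl,
        show (fderiv ℂ (fun q : Dom n => q.2.2 ν) p) v = pd (fun q : Dom n => q.2.2 ν) v p from rfl,
        pd_z, pd_a]
  simp [hsub]
  ring

lemma diff_zz0 {p : Dom n} (h : p.1 - p.2.1 ≠ 0) :
    DifferentiableAt ℂ (fun q : Dom n => (q.1 - q.2.1)⁻¹) p :=
  (diff_z.sub diff_z0).inv h

lemma pd_zz0 (v : Dom n) {p : Dom n} (h : p.1 - p.2.1 ≠ 0) :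
    pd (fun q : Dom n => (q.1 - q.2.1)⁻¹) v p
      = -(((p.1 - p.2.1) ^ 2)⁻¹) * (v.1 - v.2.1) := by
  have hd : DifferentiableAt ℂ (fun q : Dom n => q.1 - q.2.1) p := diff_z.sub diff_z0
  have h2 : HasFDerivAt (fun q : Dom n => (q.1 - q.2.1)⁻¹)
      ((ContinuousLinearMap.smulRight (1 : ℂ →L[ℂ] ℂ) (-((p.1 - p.2.1) ^ 2)⁻¹)).comp
        (fderiv ℂ (fun q : Dom n => q.1 - q.2.1) p)) p :=
    (hasFDerivAt_inv (𝕜 := ℂ) h).comp p hd.hasFDerivAt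
  rw [pd, h2.fderiv]
  have hsub : fderiv ℂ (fun q : Dom n => q.1 - q.2.1) p v = v.1 - v.2.1 := by
    rw [fderiv_fun_sub diff_z diff_z0]
    rw [ContinuousLinearMap.sub_apply]
    rw [show (fderiv ℂ (fun q : Dom n => q.1) p) v = pd (fun q : Dom n => q.1) v p from rfl,
        show (fderiv ℂ (fun q : Dom n => q.2.1) p) v = pd (fun q : Dom n => q.2.1) v p from rfl,
        pd_z, pd_z0]
  simp [hsub]; ring

lemma pd_const_mul {f : Dom n → ℂ} {p : Dom n} (k : ℂ) (v : Dom n)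
    (hf : DifferentiableAt ℂ f p) :
    pd (fun q => k * f q) v p = k * pd f v p := by
  rw [pd, fderiv_const_mul hf]; simp [pd]

@[simp] lemma dz_1 : (dz n).1 = 1 := rfl
@[simp] lemma dz_21 : (dz n).2.1 = 0 := rfl
@[simp] lemma dz_22 (ν : Fin n) : (dz n).2.2 ν = 0 := rfl
@[simp] lemma dz0_1 : (dz0 n).1 = 0 := rfl
@[simp] lemma dz0_21 : (dz0 n).2.1 = 1 := rfl
@[simp] lemma dz0_22 (ν : Fin n) : (dz0 n).2.2 ν = 0 := rfl
@[simp] lemma da_1 (ν : Fin n) : (da n ν).1 = 0 := rfl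
@[simp] lemma da_21 (ν : Fin n) : (da n ν).2.1 = 0 := rfl
@[simp] lemma da_22 (ν μ : Fin n) : (da n ν).2.2 μ = (Pi.single ν (1:ℂ) : Fin n → ℂ) μ := rfl

end IsoAux

/-- first half of the Proposition in Subsection 2.3: with `𝒫 = w·τ·Φ`,
where `Φ` solves the rank-2 traceless Fuchsian system together with its isomonodromic
deformation equations in `a_ν` and `z₀`, `τ` is the isomonodromic tau function, and
`w(z,z₀)² (z−z₀) = 1`, the matrix `𝒫` satisfies
`∂_z∂_z𝒫 = (z−z₀)⁻¹ ∂_{z₀}𝒫 + (4(z−z₀)²)⁻¹ 𝒫 + ∑_ν [(z−a_ν)⁻¹ ∂_{a_ν}𝒫 + Δ_ν (z−a_ν)⁻² 𝒫]`. -/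
theorem P_second_order_pde (n : ℕ) (hn : 1 ≤ n)
    (U : Set (Dom n)) (hU : IsOpen U)
    (hdist : ∀ p ∈ U, p.1 ≠ p.2.1 ∧ (∀ ν, p.1 ≠ p.2.2 ν) ∧ (∀ ν, p.2.1 ≠ p.2.2 ν) ∧
      ∀ μ ν : Fin n, μ ≠ ν → p.2.2 μ ≠ p.2.2 ν)
    -- the matrices A_ν : C¹ traceless functions of (a, z₀), i.e. independent of z
    (A : Fin n → Dom n → Matrix (Fin 2) (Fin 2) ℂ)
    (hA : ∀ ν, DifferentiableOn ℂ (A ν) U)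
    (hAz : ∀ ν, ∀ p ∈ U, pd (A ν) (dz n) p = 0)
    (hAtr : ∀ ν, ∀ p ∈ U, (A ν p).trace = 0)
    -- the fundamental solution Φ: C², satisfying the linear system and the
    -- isomonodromic deformation equations
    (Φ : Dom n → Matrix (Fin 2) (Fin 2) ℂ)
    (hΦ : ContDiffOn ℂ 2 Φ U)
    (hΦz : ∀ p ∈ U, pd Φ (dz n) p = (∑ ν, (p.1 - p.2.2 ν)⁻¹ • A ν p) * Φ p)
    (hΦa : ∀ ν : Fin n, ∀ p ∈ U, pd Φ (da n ν) p =
      (-((p.2.1 - p.1) / ((p.2.1 - p.2.2 ν) * (p.1 - p.2.2 ν)))) • (A ν p * Φ p))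
    (hΦz0 : ∀ p ∈ U, pd Φ (dz0 n) p = -((∑ ν, (p.2.1 - p.2.2 ν)⁻¹ • A ν p) * Φ p))
    -- the tau function: nonvanishing, C¹, independent of z, with
    -- ∂_{a_μ}τ/τ = ∑_{ν≠μ} tr(A_μA_ν)/(a_μ−a_ν) and ∂_{z₀}τ = 0
    (T : Dom n → ℂ)
    (hT : DifferentiableOn ℂ T U)
    (hTne : ∀ p ∈ U, T p ≠ 0)
    (hTz : ∀ p ∈ U, pd T (dz n) p = 0)
    (hTz0 : ∀ p ∈ U, pd T (dz0 n) p = 0)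
    (hTa : ∀ μ : Fin n, ∀ p ∈ U, pd T (da n μ) p / T p =
      ∑ ν ∈ univ.erase μ, (A μ p * A ν p).trace / (p.2.2 μ - p.2.2 ν))
    -- the scalar w: C¹ function of (z, z₀) with w²(z−z₀) = 1,
    -- ∂_z w = −w/(2(z−z₀)), ∂_{z₀} w = w/(2(z−z₀))
    (W : Dom n → ℂ)
    (hW : DifferentiableOn ℂ W U)
    (hWa : ∀ ν : Fin n, ∀ p ∈ U, pd W (da n ν) p = 0)
    (hWsq : ∀ p ∈ U, W p ^ 2 * (p.1 - p.2.1) = 1)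
    (hWz : ∀ p ∈ U, pd W (dz n) p = -(W p / (2 * (p.1 - p.2.1))))
    (hWz0 : ∀ p ∈ U, pd W (dz0 n) p = W p / (2 * (p.1 - p.2.1))) :
    ∀ p ∈ U,
      pd (pd (fun q => (W q * T q) • Φ q) (dz n)) (dz n) p =
        (p.1 - p.2.1)⁻¹ • pd (fun q => (W q * T q) • Φ q) (dz0 n) p
          + (4 * (p.1 - p.2.1) ^ 2)⁻¹ • ((W p * T p) • Φ p)
          + ∑ ν, ((p.1 - p.2.2 ν)⁻¹ • pd (fun q => (W q * T q) • Φ q) (da n ν) p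
              + ((1 / 2 * (A ν p * A ν p).trace) / (p.1 - p.2.2 ν) ^ 2) • ((W p * T p) • Φ p)) := by
  intro p hp
  obtain ⟨hzz0, hza, hz0a, haa⟩ := hdist p hp
  have hmem : U ∈ nhds p := hU.mem_nhds hp
  -- differentiability of the data
  have hWd : ∀ q ∈ U, DifferentiableAt ℂ W q :=
    fun q hq => (hW q hq).differentiableAt (hU.mem_nhds hq)
  have hTd : ∀ q ∈ U, DifferentiableAt ℂ T q :=
    fun q hq => (hT q hq).differentiableAt (hU.mem_nhds hq)
  have hAd : ∀ ν, ∀ q ∈ U, DifferentiableAt ℂ (A ν) q :=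
    fun ν q hq => (hA ν q hq).differentiableAt (hU.mem_nhds hq)
  have hΦd : ∀ q ∈ U, DifferentiableAt ℂ Φ q := fun q hq =>
    ((hΦ.differentiableOn (by norm_num)) q hq).differentiableAt (hU.mem_nhds hq)
  have hSd : ∀ q ∈ U, DifferentiableAt ℂ (fun q => W q * T q) q :=
    fun q hq => (hWd q hq).mul (hTd q hq)
  -- nonvanishing denominators
  have hXne : ∀ q ∈ U, q.1 - q.2.1 ≠ 0 := fun q hq => sub_ne_zero.mpr (hdist q hq).1
  have hxne : ∀ q ∈ U, ∀ ν, q.1 - q.2.2 ν ≠ 0 :=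
    fun q hq ν => sub_ne_zero.mpr ((hdist q hq).2.1 ν)
  have hyne : ∀ ν, p.2.1 - p.2.2 ν ≠ 0 := fun ν => sub_ne_zero.mpr (hz0a ν)
  have hAzd : ∀ q ∈ U, DifferentiableAt ℂ
      (fun q : Dom n => ∑ ν, (q.1 - q.2.2 ν)⁻¹ • A ν q) q := by
    intro q hq
    exact DifferentiableAt.fun_sum fun ν _ =>
      (IsoAux.diff_za ν (hxne q hq ν)).smul (hAd ν q hq)
  -- derivatives of S = W*T
  have hSz : ∀ q ∈ U, pd (fun q => W q * T q) (dz n) q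
      = ((-(2:ℂ)⁻¹) * (q.1 - q.2.1)⁻¹) * (W q * T q) := by
    intro q hq
    rw [IsoAux.pd_cmul (dz n) (hWd q hq) (hTd q hq), hWz q hq, hTz q hq]
    field_simp
    ring
  have hSz0 : ∀ q ∈ U, pd (fun q => W q * T q) (dz0 n) q
      = ((2:ℂ)⁻¹ * (q.1 - q.2.1)⁻¹) * (W q * T q) := by
    intro q hq
    rw [IsoAux.pd_cmul (dz0 n) (hWd q hq) (hTd q hq), hWz0 q hq, hTz0 q hq]
    field_simp
    ring
  have hSa : ∀ (ν : Fin n), ∀ q ∈ U, pd (fun q => W q * T q) (da n ν) q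
      = (W q * T q) * (∑ μ ∈ univ.erase ν, (A ν q * A μ q).trace / (q.2.2 ν - q.2.2 μ)) := by
    intro ν q hq
    have hTa' : pd T (da n ν) q
        = (∑ μ ∈ univ.erase ν, (A ν q * A μ q).trace / (q.2.2 ν - q.2.2 μ)) * T q :=
      (div_eq_iff (hTne q hq)).mp (hTa ν q hq)
    rw [IsoAux.pd_cmul (da n ν) (hWd q hq) (hTd q hq), hWa ν q hq, hTa']
    ring
  -- first z-derivative of P on U
  have hPz : ∀ q ∈ U, pd (fun q => (W q * T q) • Φ q) (dz n) q
      = (((-(2:ℂ)⁻¹) * (q.1 - q.2.1)⁻¹) * (W q * T q)) • Φ q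
        + (W q * T q) • ((∑ ν, (q.1 - q.2.2 ν)⁻¹ • A ν q) * Φ q) := by
    intro q hq
    rw [IsoAux.pd_smul (f := fun q => W q * T q) (g := Φ) (dz n) (hSd q hq) (hΦd q hq),
      hSz q hq, hΦz q hq]
  -- derivative of the coefficient sum 𝒜(z) in the z-direction
  have hAzz : pd (fun q : Dom n => ∑ ν, (q.1 - q.2.2 ν)⁻¹ • A ν q) (dz n) p
      = ∑ ν, (-(((p.1 - p.2.2 ν) ^ 2)⁻¹)) • A ν p := by
    rw [IsoAux.pd_sum (f := fun (ν : Fin n) (q : Dom n) => (q.1 - q.2.2 ν)⁻¹ • A ν q) univ (dz n)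
      (fun ν _ => (IsoAux.diff_za ν (hxne p hp ν)).smul (hAd ν p hp))]
    refine sum_congr rfl fun ν _ => ?_
    rw [IsoAux.pd_smul (f := fun q : Dom n => (q.1 - q.2.2 ν)⁻¹) (g := A ν) (dz n)
      (IsoAux.diff_za ν (hxne p hp ν)) (hAd ν p hp), hAz ν p hp,
      IsoAux.pd_za ν (dz n) (hxne p hp ν)]
    simp
  -- replace the inner derivative by the explicit formula
  have hsecond : pd (pd (fun q => (W q * T q) • Φ q) (dz n)) (dz n) p
      = pd (fun q => (((-(2:ℂ)⁻¹) * (q.1 - q.2.1)⁻¹) * (W q * T q)) • Φ q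
        + (W q * T q) • ((∑ ν, (q.1 - q.2.2 ν)⁻¹ • A ν q) * Φ q)) (dz n) p := by
    have hev : pd (fun q => (W q * T q) • Φ q) (dz n) =ᶠ[nhds p]
        (fun q => (((-(2:ℂ)⁻¹) * (q.1 - q.2.1)⁻¹) * (W q * T q)) • Φ q
          + (W q * T q) • ((∑ ν, (q.1 - q.2.2 ν)⁻¹ • A ν q) * Φ q)) :=
      Filter.eventuallyEq_of_mem hmem hPz
    simp only [pd]
    erw [hev.fderiv_eq (𝕜 := ℂ)]
    rfl
  rw [hsecond]
  -- differentiability of the pieces at p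
  have hcd : DifferentiableAt ℂ (fun q : Dom n => (-(2:ℂ)⁻¹) * (q.1 - q.2.1)⁻¹) p :=
    (IsoAux.diff_zz0 (hXne p hp)).const_mul _
  have hf1d : DifferentiableAt ℂ
      (fun q : Dom n => ((-(2:ℂ)⁻¹) * (q.1 - q.2.1)⁻¹) * (W q * T q)) p := hcd.mul (hSd p hp)
  have hGd : DifferentiableAt ℂ
      (fun q : Dom n => (∑ ν, (q.1 - q.2.2 ν)⁻¹ • A ν q) * Φ q) p :=
    IsoAux.diff_mul (hAzd p hp) (hΦd p hp)
  rw [IsoAux.pd_add (f := fun q => (((-(2:ℂ)⁻¹) * (q.1 - q.2.1)⁻¹) * (W q * T q)) • Φ q)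
      (g := fun q => (W q * T q) • ((∑ ν, (q.1 - q.2.2 ν)⁻¹ • A ν q) * Φ q)) (dz n)
      (hf1d.smul (hΦd p hp)) ((hSd p hp).smul hGd),
    IsoAux.pd_smul (f := fun q => ((-(2:ℂ)⁻¹) * (q.1 - q.2.1)⁻¹) * (W q * T q)) (g := Φ)
      (dz n) hf1d (hΦd p hp),
    IsoAux.pd_smul (f := fun q => W q * T q)
      (g := fun q => (∑ ν, (q.1 - q.2.2 ν)⁻¹ • A ν q) * Φ q) (dz n) (hSd p hp) hGd,
    IsoAux.pd_cmul (f := fun q : Dom n => (-(2:ℂ)⁻¹) * (q.1 - q.2.1)⁻¹)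
      (g := fun q => W q * T q) (dz n) hcd (hSd p hp),
    IsoAux.pd_mul (f := fun q : Dom n => ∑ ν, (q.1 - q.2.2 ν)⁻¹ • A ν q) (g := Φ)
      (dz n) (hAzd p hp) (hΦd p hp),
    IsoAux.pd_const_mul (f := fun q : Dom n => (q.1 - q.2.1)⁻¹) (-(2:ℂ)⁻¹) (dz n)
      (IsoAux.diff_zz0 (hXne p hp)),
    IsoAux.pd_zz0 (dz n) (hXne p hp),
    hSz p hp, hΦz p hp, hAzz]
  -- rewrite the first-order derivatives on the right-hand side
  have hPz0 : pd (fun q => (W q * T q) • Φ q) (dz0 n) p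
      = (((2:ℂ)⁻¹ * (p.1 - p.2.1)⁻¹) * (W p * T p)) • Φ p
        + (W p * T p) • -((∑ ν, (p.2.1 - p.2.2 ν)⁻¹ • A ν p) * Φ p) := by
    rw [IsoAux.pd_smul (f := fun q => W q * T q) (g := Φ) (dz0 n) (hSd p hp) (hΦd p hp),
      hSz0 p hp, hΦz0 p hp]
  have hPa : ∀ ν : Fin n, pd (fun q => (W q * T q) • Φ q) (da n ν) p
      = ((W p * T p) * (∑ μ ∈ univ.erase ν, (A ν p * A μ p).trace / (p.2.2 ν - p.2.2 μ))) • Φ p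
        + (W p * T p) •
            ((-((p.2.1 - p.1) / ((p.2.1 - p.2.2 ν) * (p.1 - p.2.2 ν)))) • (A ν p * Φ p)) := by
    intro ν
    rw [IsoAux.pd_smul (f := fun q => W q * T q) (g := Φ) (da n ν) (hSd p hp) (hΦd p hp),
      hSa ν p hp, hΦa ν p hp]
  rw [hPz0]
  simp only [hPa]
  -- the key quadratic identity
  have hkey : (∑ ν, (p.1 - p.2.2 ν)⁻¹ • A ν p) * ((∑ ν, (p.1 - p.2.2 ν)⁻¹ • A ν p) * Φ p)
      = (∑ ν, (1/2 * (A ν p * A ν p).trace / (p.1 - p.2.2 ν) ^ 2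
          + (∑ μ ∈ univ.erase ν, (A ν p * A μ p).trace / (p.2.2 ν - p.2.2 μ))
              / (p.1 - p.2.2 ν))) • Φ p := by
    rw [← mul_assoc,
      IsoAux.key_sq p.1 p.2.2 (fun ν => A ν p) (fun ν => hAtr ν p hp) (hxne p hp) haa,
      smul_mul_assoc, one_mul]
  have hAzΦ : (∑ ν, (p.1 - p.2.2 ν)⁻¹ • A ν p) * Φ p
      = ∑ ν, (p.1 - p.2.2 ν)⁻¹ • (A ν p * Φ p) := by
    rw [Finset.sum_mul]; exact sum_congr rfl fun ν _ => smul_mul_assoc _ _ _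
  have hDΦ : (∑ ν, -((p.1 - p.2.2 ν) ^ 2)⁻¹ • A ν p) * Φ p
      = ∑ ν, -((p.1 - p.2.2 ν) ^ 2)⁻¹ • (A ν p * Φ p) := by
    rw [Finset.sum_mul]; exact sum_congr rfl fun ν _ => smul_mul_assoc _ _ _
  have hAz0Φ : (∑ ν, (p.2.1 - p.2.2 ν)⁻¹ • A ν p) * Φ p
      = ∑ ν, (p.2.1 - p.2.2 ν)⁻¹ • (A ν p * Φ p) := by
    rw [Finset.sum_mul]; exact sum_congr rfl fun ν _ => smul_mul_assoc _ _ _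
  rw [hkey, hAzΦ, hDΦ, hAz0Φ]
  simp only [Finset.smul_sum, smul_smul, smul_add, smul_neg, neg_smul, Finset.mul_sum,
    Finset.sum_smul, IsoAux.dz_1, IsoAux.dz_21]
  -- canonical middle expression
  trans ((W p * T p * (3 / 4 * ((p.1 - p.2.1) ^ 2)⁻¹)) • Φ p
      + ((∑ ν, (W p * T p * (1 / 2 * (A ν p * A ν p).trace / (p.1 - p.2.2 ν) ^ 2 +
            (∑ μ ∈ univ.erase ν, (A ν p * A μ p).trace / (p.2.2 ν - p.2.2 μ))
              / (p.1 - p.2.2 ν))) • Φ p)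
        + ∑ ν, (-(W p * T p * (p.1 - p.2.1)⁻¹ * (p.1 - p.2.2 ν)⁻¹)
            - W p * T p * ((p.1 - p.2.2 ν) ^ 2)⁻¹) • (A ν p * Φ p)))
  · -- left-hand side equals the canonical expression
    have e1 : (-2⁻¹ * (-((p.1 - p.2.1) ^ 2)⁻¹ * (1 - 0)) * (W p * T p) +
          -2⁻¹ * (p.1 - p.2.1)⁻¹ * (-2⁻¹ * (p.1 - p.2.1)⁻¹ * (W p * T p)))
        = W p * T p * (3 / 4 * ((p.1 - p.2.1) ^ 2)⁻¹) := by
      have h1 : p.1 - p.2.1 ≠ 0 := hXne p hp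
      field_simp
      ring
    have e3 : (∑ ν, (-2⁻¹ * (p.1 - p.2.1)⁻¹ * (W p * T p) * (p.1 - p.2.2 ν)⁻¹) • (A ν p * Φ p))
        + (∑ ν, (-2⁻¹ * (p.1 - p.2.1)⁻¹ * (W p * T p) * (p.1 - p.2.2 ν)⁻¹) • (A ν p * Φ p))
        + (∑ ν, -((W p * T p * ((p.1 - p.2.2 ν) ^ 2)⁻¹) • (A ν p * Φ p)))
        = ∑ ν, (-(W p * T p * (p.1 - p.2.1)⁻¹ * (p.1 - p.2.2 ν)⁻¹)
            - W p * T p * ((p.1 - p.2.2 ν) ^ 2)⁻¹) • (A ν p * Φ p) := by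
      rw [← Finset.sum_add_distrib, ← Finset.sum_add_distrib]
      refine sum_congr rfl fun ν _ => ?_
      rw [← neg_smul, ← add_smul, ← add_smul]
      congr 1
      ring
    rw [e1, ← e3]
    abel
  · -- canonical expression equals the right-hand side
    have regroup : ∑ ν, ((∑ μ ∈ univ.erase ν, ((p.1 - p.2.2 ν)⁻¹ *
            (W p * T p * ((A ν p * A μ p).trace / (p.2.2 ν - p.2.2 μ)))) • Φ p)
          + -(((p.1 - p.2.2 ν)⁻¹ * (W p * T p *
              ((p.2.1 - p.1) / ((p.2.1 - p.2.2 ν) * (p.1 - p.2.2 ν))))) • (A ν p * Φ p))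
          + (1 / 2 * (A ν p * A ν p).trace / (p.1 - p.2.2 ν) ^ 2 * (W p * T p)) • Φ p)
        = (∑ ν, ((∑ μ ∈ univ.erase ν, ((p.1 - p.2.2 ν)⁻¹ *
            (W p * T p * ((A ν p * A μ p).trace / (p.2.2 ν - p.2.2 μ)))) • Φ p)
          + (1 / 2 * (A ν p * A ν p).trace / (p.1 - p.2.2 ν) ^ 2 * (W p * T p)) • Φ p))
          + ∑ ν, -(((p.1 - p.2.2 ν)⁻¹ * (W p * T p *
              ((p.2.1 - p.1) / ((p.2.1 - p.2.2 ν) * (p.1 - p.2.2 ν))))) • (A ν p * Φ p)) := by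
      rw [← Finset.sum_add_distrib]
      exact sum_congr rfl fun ν _ => by abel
    have hΓ : (∑ ν, ((∑ μ ∈ univ.erase ν, ((p.1 - p.2.2 ν)⁻¹ *
            (W p * T p * ((A ν p * A μ p).trace / (p.2.2 ν - p.2.2 μ)))) • Φ p)
          + (1 / 2 * (A ν p * A ν p).trace / (p.1 - p.2.2 ν) ^ 2 * (W p * T p)) • Φ p))
        = ∑ ν, (W p * T p * (1 / 2 * (A ν p * A ν p).trace / (p.1 - p.2.2 ν) ^ 2 +
            (∑ μ ∈ univ.erase ν, (A ν p * A μ p).trace / (p.2.2 ν - p.2.2 μ))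
              / (p.1 - p.2.2 ν))) • Φ p := by
      refine sum_congr rfl fun ν _ => ?_
      rw [← Finset.sum_smul, ← add_smul]
      congr 1
      rw [show (∑ μ ∈ univ.erase ν, ((p.1 - p.2.2 ν)⁻¹ *
            (W p * T p * ((A ν p * A μ p).trace / (p.2.2 ν - p.2.2 μ)))))
          = (∑ μ ∈ univ.erase ν, (A ν p * A μ p).trace / (p.2.2 ν - p.2.2 μ))
              * ((p.1 - p.2.2 ν)⁻¹ * (W p * T p)) from by
        rw [Finset.sum_mul]; exact sum_congr rfl fun μ _ => by ring]
      ring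
    have hβ : (-∑ ν, ((p.1 - p.2.1)⁻¹ * (W p * T p * (p.2.1 - p.2.2 ν)⁻¹)) • (A ν p * Φ p))
          + ∑ ν, -(((p.1 - p.2.2 ν)⁻¹ * (W p * T p *
              ((p.2.1 - p.1) / ((p.2.1 - p.2.2 ν) * (p.1 - p.2.2 ν))))) • (A ν p * Φ p))
        = ∑ ν, (-(W p * T p * (p.1 - p.2.1)⁻¹ * (p.1 - p.2.2 ν)⁻¹)
            - W p * T p * ((p.1 - p.2.2 ν) ^ 2)⁻¹) • (A ν p * Φ p) := by
      rw [← Finset.sum_neg_distrib, ← Finset.sum_add_distrib]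
      refine sum_congr rfl fun ν _ => ?_
      rw [← neg_smul, ← neg_smul, ← add_smul]
      congr 1
      have h1 : p.1 - p.2.1 ≠ 0 := hXne p hp
      have h2 : p.1 - p.2.2 ν ≠ 0 := hxne p hp ν
      have h3 : p.2.1 - p.2.2 ν ≠ 0 := hyne ν
      field_simp
      ring
    rw [regroup, hΓ, ← hβ,
      show W p * T p * (3 / 4 * ((p.1 - p.2.1) ^ 2)⁻¹)
        = (p.1 - p.2.1)⁻¹ * (2⁻¹ * (p.1 - p.2.1)⁻¹ * (W p * T p))
          + (4 * (p.1 - p.2.1) ^ 2)⁻¹ * (W p * T p) from by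
        have h1 : p.1 - p.2.1 ≠ 0 := hXne p hp
        field_simp
        ring,
      add_smul]
    abel

end
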